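/- arXiv:2105.12150 — 3 statements merged into one kernel-verified Lean document; each statement's English description precedes it below -/
import Mathlib

section
/- In a median graph G with a fixed basepoint v₀, for every vertex m, the maximum distance Υ(m) = max{ d(u,v) : u,v ∈ V, m = m(u,v,v₀) } satisfies Υ(m) = max{ φ(m,L) + φ(m,L*) : L, L* POFs outgoing from m with L ∩ L* = ∅ }, and consequently diam(G) = max over all vertices m of max{ φ(m,L) + φ(m,L*) : L, L* POFs outgoing from m with L ∩ L* = ∅ }. -/
namespace MedianPaper

variable {V : Type*}

/-- The metric interval `I(u,v)`: vertices on shortest `(u,v)`-paths. -/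
def interval (G : SimpleGraph V) (u v : V) : Set V :=
  {w | G.dist u w + G.dist w v = G.dist u v}

/-- A median graph: a connected graph in which every triple of vertices
has a unique median. -/
def MedianGraph (G : SimpleGraph V) : Prop :=
  G.Connected ∧ ∀ x y z : V, ∃! m : V,
    m ∈ interval G x y ∧ m ∈ interval G y z ∧ m ∈ interval G z x

/-- `u v x y` span a 4-cycle `u-v-y-x-u`, with opposite edge pairs
`(uv, xy)` and `(ux, vy)`. -/
def IsSquare (G : SimpleGraph V) (u v x y : V) : Prop :=
  G.Adj u v ∧ G.Adj x y ∧ G.Adj u x ∧ G.Adj v y ∧ u ≠ y ∧ v ≠ x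

/-- Two edges are in relation Θ₀ if they are opposite edges of a common 4-cycle. -/
def Theta0 (G : SimpleGraph V) (e f : Sym2 V) : Prop :=
  ∃ u v x y : V, IsSquare G u v x y ∧ e = s(u, v) ∧ f = s(x, y)

/-- Θ : the reflexive-transitive closure of Θ₀ on the edges of `G`. -/
def Theta (G : SimpleGraph V) (e f : Sym2 V) : Prop :=
  e ∈ G.edgeSet ∧ f ∈ G.edgeSet ∧ Relation.ReflTransGen (Theta0 G) e f

/-- The Θ-classes of `G`: equivalence classes of edges under Θ. -/
def ThetaClass (G : SimpleGraph V) (C : Set (Sym2 V)) : Prop :=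
  ∃ e ∈ G.edgeSet, C = {f | Theta G e f}

/-- The edge set `C` separates `u` from `v` : they lie in different
components of `G` minus `C`. -/
def Separates (G : SimpleGraph V) (C : Set (Sym2 V)) (u v : V) : Prop :=
  ¬ (G.deleteEdges C).Reachable u v

/-- The signature `σ_{u,v}`: Θ-classes separating `u` from `v`. -/
def signature (G : SimpleGraph V) (u v : V) : Set (Set (Sym2 V)) :=
  {C | ThetaClass G C ∧ Separates G C u v}

/-- `H`, `H'` are the two connected components (halfspaces) of `G` deprived
of the edges in `C`. -/
def IsHalfspacePair (G : SimpleGraph V) (C : Set (Sym2 V)) (H H' : Set V) : Prop :=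
  H.Nonempty ∧ H'.Nonempty ∧ Disjoint H H' ∧ H ∪ H' = Set.univ ∧
  (∀ x ∈ H, ∀ y ∈ H, (G.deleteEdges C).Reachable x y) ∧
  (∀ x ∈ H', ∀ y ∈ H', (G.deleteEdges C).Reachable x y) ∧
  (∀ x ∈ H, ∀ y ∈ H', ¬ (G.deleteEdges C).Reachable x y)

/-- The boundary of a halfspace `H` of the Θ-class `C` : vertices of `H`
incident to an edge of `C`. -/
def boundarySet (G : SimpleGraph V) (C : Set (Sym2 V)) (H : Set V) : Set V :=
  {x | x ∈ H ∧ ∃ y, G.Adj x y ∧ s(x, y) ∈ C}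

/-- Orthogonality of Θ-classes: there is a common square using both. -/
def Orthogonal (G : SimpleGraph V) (C₁ C₂ : Set (Sym2 V)) : Prop :=
  ∃ u v x y : V, IsSquare G u v x y ∧
    s(u, v) ∈ C₁ ∧ s(x, y) ∈ C₁ ∧ s(u, x) ∈ C₂ ∧ s(v, y) ∈ C₂

/-- A pairwise orthogonal family (POF) of Θ-classes. -/
def IsPOF (G : SimpleGraph V) (X : Set (Set (Sym2 V))) : Prop :=
  (∀ C ∈ X, ThetaClass G C) ∧
  ∀ C ∈ X, ∀ C' ∈ X, C ≠ C' → Orthogonal G C C'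

/-- The `k`-dimensional hypercube graph, on subsets of `{1,…,k}`;
two subsets are adjacent iff their symmetric difference has one element. -/
def cubeGraph (k : ℕ) : SimpleGraph (Finset (Fin k)) where
  Adj A B := (symmDiff A B).card = 1
  symm := by
    constructor
    intro A B h
    rwa [symmDiff_comm] at h
  loopless := by
    constructor
    intro A h
    simp [symmDiff_self] at h

/-- `S` induces a hypercube of dimension `k` in `G`. -/
def IsCubeDim (G : SimpleGraph V) (S : Set V) (k : ℕ) : Prop :=
  Nonempty ((G.induce S) ≃g cubeGraph k)

/-- `S` induces a hypercube in `G`. -/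
def IsInducedCube (G : SimpleGraph V) (S : Set V) : Prop :=
  ∃ k, IsCubeDim G S k

/-- The dimension of `G` is `d`: the largest dimension of an induced hypercube. -/
def GraphDim (G : SimpleGraph V) (d : ℕ) : Prop :=
  (∃ S : Set V, IsCubeDim G S d) ∧ ∀ (S : Set V) (k : ℕ), IsCubeDim G S k → k ≤ d

/-- The Θ-classes of the edges of the induced subgraph on `S`. -/
def cubeClasses (G : SimpleGraph V) (S : Set V) : Set (Set (Sym2 V)) :=
  {C | ThetaClass G C ∧ ∃ x ∈ S, ∃ y ∈ S, G.Adj x y ∧ s(x, y) ∈ C}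

/-- With the `v₀`-orientation, `b ∈ S` is the basis of `S`: all edges of `S`
incident to `b` are outgoing from `b`. -/
def IsBasis (G : SimpleGraph V) (v₀ : V) (S : Set V) (b : V) : Prop :=
  b ∈ S ∧ ∀ w ∈ S, G.Adj b w → G.dist v₀ b < G.dist v₀ w

/-- With the `v₀`-orientation, `b ∈ S` is the anti-basis of `S`: all edges of `S`
incident to `b` are ingoing to `b`. -/
def IsAntiBasis (G : SimpleGraph V) (v₀ : V) (S : Set V) (b : V) : Prop :=
  b ∈ S ∧ ∀ w ∈ S, G.Adj b w → G.dist v₀ w < G.dist v₀ b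

/-- `ℰ⁻(v)` : the Θ-classes containing at least one edge ingoing to `v`. -/
def inClasses (G : SimpleGraph V) (v₀ v : V) : Set (Set (Sym2 V)) :=
  {C | ThetaClass G C ∧ ∃ u, G.Adj u v ∧ G.dist v₀ u < G.dist v₀ v ∧ s(u, v) ∈ C}

/-- The ladder set `L_{u,v}`: classes of the signature `σ_{u,v}` having an
edge incident to `u`. -/
def ladder (G : SimpleGraph V) (u v : V) : Set (Set (Sym2 V)) :=
  {C | C ∈ signature G u v ∧ ∃ w, G.Adj u w ∧ s(u, w) ∈ C}

/-- A POF each of whose classes has an edge outgoing from `u`. -/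
def OutgoingPOF (G : SimpleGraph V) (v₀ u : V) (L : Set (Set (Sym2 V))) : Prop :=
  IsPOF G L ∧ ∀ C ∈ L, ∃ w, G.Adj u w ∧ G.dist v₀ u < G.dist v₀ w ∧ s(u, w) ∈ C

/-- A POF each of whose classes has an edge ingoing to `u`. -/
def IngoingPOF (G : SimpleGraph V) (v₀ u : V) (X : Set (Set (Sym2 V))) : Prop :=
  IsPOF G X ∧ ∀ C ∈ X, ∃ w, G.Adj w u ∧ G.dist v₀ w < G.dist v₀ u ∧ s(w, u) ∈ C

/-- `m` is a median of the triple `x, y, z`. -/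
def IsMedian (G : SimpleGraph V) (x y z m : V) : Prop :=
  m ∈ interval G x y ∧ m ∈ interval G y z ∧ m ∈ interval G z x

/-- `b` is the milestone following `a` on the way to `v`: `b` is the anti-basis of
the induced hypercube with basis `a` whose Θ-classes are the ladder set `L_{a,v}`. -/
def NextMilestone (G : SimpleGraph V) (v₀ v a b : V) : Prop :=
  ∃ S : Set V, IsInducedCube G S ∧ IsBasis G v₀ S a ∧ IsAntiBasis G v₀ S b ∧
    cubeClasses G S = ladder G a v

/-- The milestone set `Π(u,v)`: vertices obtained from `u` by iterating the
next-milestone step towards `v`. -/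
def MilestoneSet (G : SimpleGraph V) (v₀ u v : V) : Set V :=
  {p | Relation.ReflTransGen (fun a b => NextMilestone G v₀ v a b) u p}

/-- The penultimate milestone `π̄(u,v)`: the milestone of `Π(u,v)` other than `v`
closest to `v`, i.e. whose next milestone is `v` itself. -/
def IsPenultimate (G : SimpleGraph V) (v₀ u v p : V) : Prop :=
  p ∈ MilestoneSet G v₀ u v ∧ p ≠ v ∧ NextMilestone G v₀ v p v

/-- A convex set of vertices. -/
def ConvexSet (G : SimpleGraph V) (H : Set V) : Prop :=
  ∀ u ∈ H, ∀ v ∈ H, interval G u v ⊆ H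

/-- A gated set of vertices: each vertex has a gate in `H`. -/
def GatedSet (G : SimpleGraph V) (H : Set V) : Prop :=
  ∀ x : V, ∃ g ∈ H, ∀ h ∈ H, g ∈ interval G x h


section Basic
variable {G : SimpleGraph V}

lemma dc (G : SimpleGraph V) (a b : V) : G.dist a b = G.dist b a := SimpleGraph.dist_comm

lemma da {G : SimpleGraph V} {a b : V} (h : G.Adj a b) : G.dist a b = 1 :=
  SimpleGraph.dist_eq_one_iff_adj.2 h


lemma theta0_symm : Symmetric (Theta0 G) := by
  rintro e f ⟨u, v, x, y, ⟨h1, h2, h3, h4, h5, h6⟩, he, hf⟩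
  exact ⟨x, y, u, v, ⟨h2, h1, h3.symm, h4.symm, fun h => h6 h.symm, fun h => h5 h.symm⟩, hf, he⟩

lemma theta_refl {e : Sym2 V} (he : e ∈ G.edgeSet) : Theta G e e :=
  ⟨he, he, Relation.ReflTransGen.refl⟩

lemma theta_symm {e f : Sym2 V} (h : Theta G e f) : Theta G f e :=
  by
    haveI : Std.Symm (Theta0 G) := ⟨fun _ _ h => theta0_symm h⟩
    exact ⟨h.2.1, h.1, Relation.ReflTransGen.symmetric.symm _ _ h.2.2⟩

lemma theta_trans {e f g : Sym2 V} (h : Theta G e f) (h' : Theta G f g) : Theta G e g :=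
  ⟨h.1, h'.2.1, h.2.2.trans h'.2.2⟩

lemma theta_edge {e f : Sym2 V} (h : Theta G e f) : f ∈ G.edgeSet := h.2.1

/-- A Θ-class containing an edge is the class of that edge. -/
lemma class_eq {C : Set (Sym2 V)} (hC : ThetaClass G C) {e : Sym2 V} (he : e ∈ C) :
    C = {f | Theta G e f} := by
  obtain ⟨e₀, he₀, rfl⟩ := hC
  ext f
  simp only [Set.mem_setOf_eq] at he ⊢
  exact ⟨fun h => theta_trans (theta_symm he) h, fun h => theta_trans he h⟩

lemma thetaClass_of_adj {a b : V} (hab : G.Adj a b) : ThetaClass G {f | Theta G (s(a,b)) f} :=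
  ⟨s(a,b), hab, rfl⟩

lemma self_mem_class {a b : V} (hab : G.Adj a b) : s(a,b) ∈ {f | Theta G (s(a,b)) f} :=
  theta_refl hab

end Basic

section Median
variable {G : SimpleGraph V} (hmed : MedianGraph G)
include hmed

lemma hconn : G.Connected := hmed.1

lemma dist_zero_iff {x y : V} : G.dist x y = 0 ↔ x = y :=
  (hmed.1.dist_eq_zero_iff)

lemma mem_interval_adj {x y m : V} (hxy : G.Adj x y) (hm : m ∈ interval G x y) :
    m = x ∨ m = y := by
  have h1 : G.dist x m + G.dist m y = 1 := by
    have := hm; rwa [interval, Set.mem_setOf_eq, da hxy] at this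
  rcases Nat.eq_zero_or_pos (G.dist x m) with h | h
  · left; exact ((dist_zero_iff hmed).1 h).symm
  · right; exact (dist_zero_iff hmed).1 (by omega)

/-- Median graphs are "locally bipartite": distances to the two ends of an edge differ. -/
lemma dist_ne_of_adj {x y : V} (hxy : G.Adj x y) (z : V) : G.dist z x ≠ G.dist z y := by
  obtain ⟨m, ⟨h1, h2, h3⟩, -⟩ := hmed.2 x y z
  have c1 := dc G z x
  have c2 := dc G z y
  rcases mem_interval_adj hmed hxy h1 with rfl | rfl
  · have e : G.dist y m + G.dist m z = G.dist y z := h2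
    have hd : G.dist y m = 1 := da hxy.symm
    have c3 := dc G m z
    have c4 := dc G y z
    omega
  · have e : G.dist z m + G.dist m x = G.dist z x := h3
    have hd : G.dist m x = 1 := da hxy.symm
    omega

lemma adj_dist_cases {x y : V} (hxy : G.Adj x y) (z : V) :
    G.dist z y = G.dist z x + 1 ∨ G.dist z x = G.dist z y + 1 := by
  have h1 : G.dist z y ≤ G.dist z x + 1 := by
    have := hmed.1.dist_triangle (u := z) (v := x) (w := y)
    rwa [da hxy] at this
  have h2 : G.dist z x ≤ G.dist z y + 1 := by
    have := hmed.1.dist_triangle (u := z) (v := y) (w := x)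
    rwa [da hxy.symm] at this
  have := dist_ne_of_adj hmed hxy z
  omega

lemma no_triangle {a b c : V} (hab : G.Adj a b) (hbc : G.Adj b c) (hca : G.Adj c a) : False := by
  have := dist_ne_of_adj hmed hbc a
  rw [da hab, da hca.symm] at this
  exact this rfl

/-- Quadrangle condition. -/
lemma quad {m w w' u : V} (h1 : G.Adj m w) (h2 : G.Adj m w') (hne : w ≠ w')
    (hd1 : G.dist u w + 1 = G.dist u m) (hd2 : G.dist u w' + 1 = G.dist u m) :
    ∃ t, G.Adj w t ∧ G.Adj w' t ∧ G.dist u t + 2 = G.dist u m ∧ t ≠ m := by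
  have hnadj : ¬ G.Adj w w' := by
    intro h
    exact no_triangle hmed h1 h h2.symm
  have hww' : G.dist w w' = 2 := by
    have hle : G.dist w w' ≤ G.dist w m + G.dist m w' := hmed.1.dist_triangle
    have e1 : G.dist m w = 1 := da h1
    have e2 : G.dist m w' = 1 := da h2
    have c1 := dc G w m
    have h0 : G.dist w w' ≠ 0 := fun h => hne ((dist_zero_iff hmed).1 h)
    have h1' : G.dist w w' ≠ 1 := fun h => hnadj (SimpleGraph.dist_eq_one_iff_adj.1 h)
    omega
  obtain ⟨t, ⟨ht1, ht2, ht3⟩, -⟩ := hmed.2 w w' u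
  have e1 : G.dist w t + G.dist t w' = 2 := by
    have := ht1; rwa [interval, Set.mem_setOf_eq, hww'] at this
  have e2 : G.dist w' t + G.dist t u = G.dist w' u := ht2
  have e3 : G.dist u t + G.dist t w = G.dist u w := ht3
  have c1 := dc G t u
  have c2 := dc G u w'
  have c3 := dc G t w
  have c4 := dc G w' t
  have e0 : G.dist m w = 1 := da h1
  have hw1 : G.dist w t = 1 := by omega
  have hw2 : G.dist t w' = 1 := by omega
  refine ⟨t, SimpleGraph.dist_eq_one_iff_adj.1 hw1,
    (SimpleGraph.dist_eq_one_iff_adj.1 hw2).symm, by omega, ?_⟩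
  intro h
  subst h
  omega

/-- No K_{2,3}: two vertices cannot have three distinct common neighbours. -/
lemma no_K23 {u y v x w : V} (huy : u ≠ y)
    (h1 : G.Adj u v) (h2 : G.Adj u x) (h3 : G.Adj u w)
    (h4 : G.Adj v y) (h5 : G.Adj x y) (h6 : G.Adj w y)
    (hvx : v ≠ x) (hvw : v ≠ w) (hxw : x ≠ w) : False := by
  have dist2 : ∀ p q : V, p ≠ q → G.Adj u p → G.Adj u q → G.Adj p y → G.Adj q y → G.dist p q = 2 := by
    intro p q hpq hup huq hpy hqy
    have hnadj : ¬ G.Adj p q := fun h => no_triangle hmed hup h huq.symm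
    have hle : G.dist p q ≤ 2 := by
      have := hmed.1.dist_triangle (u := p) (v := u) (w := q)
      rw [dc G p u, da hup,
        da huq] at this
      omega
    have h0 : G.dist p q ≠ 0 := fun h => hpq ((dist_zero_iff hmed).1 h)
    have h1' : G.dist p q ≠ 1 := fun h => hnadj ((SimpleGraph.dist_eq_one_iff_adj).1 h)
    omega
  have dvx := dist2 v x hvx h1 h2 h4 h5
  have dxw := dist2 x w hxw h2 h3 h5 h6
  have dwv := dist2 w v (Ne.symm hvw) h3 h1 h6 h4
  obtain ⟨m, -, hmuniq⟩ := hmed.2 v x w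
  have memu : u ∈ interval G v x ∧ u ∈ interval G x w ∧ u ∈ interval G w v := by
    refine ⟨?_, ?_, ?_⟩ <;>
      simp only [interval, Set.mem_setOf_eq]
    · rw [dvx, dc G v u, da h1,
        da h2]
    · rw [dxw, dc G x u, da h2,
        da h3]
    · rw [dwv, dc G w u, da h3,
        da h1]
  have memy : y ∈ interval G v x ∧ y ∈ interval G x w ∧ y ∈ interval G w v := by
    refine ⟨?_, ?_, ?_⟩ <;>
      simp only [interval, Set.mem_setOf_eq]
    · rw [dvx, da h4, dc G y x,
        da h5]
    · rw [dxw, da h5, dc G y w,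
        da h6]
    · rw [dwv, da h6, dc G y v,
        da h4]
  exact huy ((hmuniq u memu).trans (hmuniq y memy).symm)


/-- Opposite edges of a square define the same bipartition by distances. -/
lemma square_side {u v x y : V} (hsq : IsSquare G u v x y) (z : V) :
    (G.dist z u < G.dist z v ↔ G.dist z x < G.dist z y) := by
  have main : ∀ u v x y : V, IsSquare G u v x y →
      G.dist z u < G.dist z v → G.dist z x < G.dist z y := by
    rintro u v x y ⟨h1, h2, h3, h4, h5, h6⟩ hlt
    have hv : G.dist z v = G.dist z u + 1 := by
      rcases adj_dist_cases hmed h1 z with h | h <;> omega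
    by_contra hcon
    have hyx : G.dist z x = G.dist z y + 1 := by
      rcases adj_dist_cases hmed h2 z with h | h <;> omega
    rcases adj_dist_cases hmed h3 z with hx | hx
    · -- d z x = d z u + 1, so d z y = d z u
      have hy : G.dist z y = G.dist z u := by omega
      have hnadj : ¬ G.Adj u y := fun h => no_triangle hmed h1 h4 h.symm
      have huy : G.dist u y = 2 := by
        have hle : G.dist u y ≤ G.dist u v + G.dist v y := hmed.1.dist_triangle
        have e1 : G.dist u v = 1 := da h1
        have e2 : G.dist v y = 1 := da h4
        have h0 : G.dist u y ≠ 0 := fun h => h5 ((dist_zero_iff hmed).1 h)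
        have h1' : G.dist u y ≠ 1 := fun h => hnadj (SimpleGraph.dist_eq_one_iff_adj.1 h)
        omega
      obtain ⟨m, ⟨hm1, hm2, hm3⟩, -⟩ := hmed.2 u y z
      have e1 : G.dist u m + G.dist m y = 2 := by
        have := hm1; rwa [interval, Set.mem_setOf_eq, huy] at this
      have e2 : G.dist y m + G.dist m z = G.dist y z := hm2
      have e3 : G.dist z m + G.dist m u = G.dist z u := hm3
      have c1 := dc G y m
      have c2 := dc G m z
      have c3 := dc G y z
      have c4 := dc G m u
      have hmu : G.dist u m = 1 := by omega
      have hmy : G.dist m y = 1 := by omega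
      have hzm : G.dist z m + 1 = G.dist z u := by omega
      refine no_K23 hmed h5 h1 h3 (SimpleGraph.dist_eq_one_iff_adj.1 hmu) h4 h2
        (SimpleGraph.dist_eq_one_iff_adj.1 hmy) h6 ?_ ?_
      · intro h; subst h; omega
      · intro h; subst h; omega
    · -- d z u = d z x + 1, so d z y + 2 = d z u
      have : G.dist z v ≤ G.dist z y + 1 := by
        have hle : G.dist z v ≤ G.dist z y + G.dist y v := hmed.1.dist_triangle
        have e : G.dist y v = 1 := da h4.symm
        omega
      omega
  have hsq' : IsSquare G x y u v :=
    ⟨hsq.2.1, hsq.1, hsq.2.2.1.symm, hsq.2.2.2.1.symm,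
      fun h => hsq.2.2.2.2.2 h.symm, fun h => hsq.2.2.2.2.1 h.symm⟩
  exact ⟨main u v x y hsq, main x y u v hsq'⟩

/-- Along a Θ-chain, the distance bipartition is preserved. -/
lemma side_chain {a b : V} (hab : G.Adj a b) {f : Sym2 V}
    (h : Relation.ReflTransGen (Theta0 G) (s(a,b)) f) :
    ∃ x y : V, f = s(x,y) ∧ G.Adj x y ∧
      ∀ z, (G.dist z a < G.dist z b ↔ G.dist z x < G.dist z y) := by
  induction h with
  | refl => exact ⟨a, b, rfl, hab, fun z => Iff.rfl⟩
  | tail h0 hstep ih =>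
    obtain ⟨x, y, rfl, hxy, hside⟩ := ih
    obtain ⟨u, v, p, q, hsq, hef, rfl⟩ := hstep
    have hpq : G.Adj p q := hsq.2.1
    have huv : G.Adj u v := hsq.1
    rcases Sym2.eq_iff.1 hef with ⟨rfl, rfl⟩ | ⟨rfl, rfl⟩
    · refine ⟨p, q, rfl, hpq, fun z => (hside z).trans (square_side hmed hsq z)⟩
    · refine ⟨q, p, Sym2.eq_swap, hpq.symm, fun z => ?_⟩
      have hsq' := square_side hmed hsq z
      have hne1 := dist_ne_of_adj hmed huv z
      have hne2 := dist_ne_of_adj hmed hpq z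
      rw [hside z]
      rcases adj_dist_cases hmed huv z with h1 | h1 <;>
        rcases adj_dist_cases hmed hpq z with h2 | h2 <;>
        first
          | (constructor <;> intro <;> omega)
          | exact absurd (hsq'.1 (by omega)) (by omega)
          | exact absurd (hsq'.2 (by omega)) (by omega)

omit hmed in
lemma exists_adj_dist (hconn : G.Connected) {p a : V} {n : ℕ} (h : G.dist p a = n + 1) :
    ∃ p₂, G.Adj p p₂ ∧ G.dist p₂ a = n := by
  obtain ⟨w, hw⟩ := hconn.exists_walk_length_eq_dist p a
  cases w with
  | nil => rw [SimpleGraph.Walk.length_nil] at hw; omega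
  | @cons _ b _ hadj w' =>
    rw [SimpleGraph.Walk.length_cons] at hw
    refine ⟨b, hadj, ?_⟩
    have h1 : G.dist b a ≤ n := by
      have := SimpleGraph.dist_le w'
      omega
    have h2 : G.dist p a ≤ G.dist p b + G.dist b a := hconn.dist_triangle
    have h3 : G.dist p b ≤ 1 := by
      have := SimpleGraph.dist_le (SimpleGraph.Walk.cons hadj SimpleGraph.Walk.nil)
      simpa using this
    omega

/-- Every edge crossing the bipartition of an edge is Θ-related to it. -/
lemma cross {a b : V} (hab : G.Adj a b) :
    ∀ k p q, G.dist p a = k → G.Adj p q → G.dist p a < G.dist p b →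
      G.dist q b < G.dist q a →
      Relation.ReflTransGen (Theta0 G) (s(a,b)) (s(p,q)) := by
  intro k
  induction k using Nat.strong_induction_on with
  | _ k ih =>
    intro p q hk hpq hp hq
    match k, hk with
    | 0, hk =>
      have hpa : p = a := (dist_zero_iff hmed).1 hk
      have hqa : G.dist q a = 1 := by
        have e := da hpq
        rw [hpa] at e
        have c := dc G a q
        omega
      have hqb : q = b := by
        have h0 : G.dist q b = 0 := by omega
        exact (dist_zero_iff hmed).1 h0
      rw [hpa, hqb]
    | (n+1), hk =>
      have hpb : G.dist p b = n + 2 := by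
        rcases adj_dist_cases hmed hab p with h | h <;> omega
      have hqa : G.dist q a = n + 2 ∧ G.dist q b = n + 1 := by
        have hcase := adj_dist_cases hmed hpq a
        have c1 := dc G a q
        have c2 := dc G a p
        have hqab := adj_dist_cases hmed hab q
        have htr : G.dist p b ≤ G.dist p q + G.dist q b := hmed.1.dist_triangle
        have e1 : G.dist p q = 1 := da hpq
        omega
      obtain ⟨p₂, hpp₂, hp₂a⟩ := exists_adj_dist hmed.1 hk
      have hp₂b : G.dist p₂ b = n + 1 := by
        have h1 : G.dist p₂ b ≤ G.dist p₂ a + G.dist a b := hmed.1.dist_triangle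
        have h2 : G.dist p b ≤ G.dist p p₂ + G.dist p₂ b := hmed.1.dist_triangle
        have e1 : G.dist a b = 1 := da hab
        have e2 : G.dist p p₂ = 1 := da hpp₂
        omega
      obtain ⟨t, hqt, hp₂t, hbt, htp⟩ := quad hmed (u := b) hpq hpp₂
        (by intro h; rw [h] at hqa; omega)
        (by have c1 := dc G b q; have c2 := dc G b p; omega)
        (by have c1 := dc G b p₂; have c2 := dc G b p; omega)
      have hbt' : G.dist t b = n := by
        have c1 := dc G b t; have c2 := dc G b p; omega
      have hta : G.dist t a = n + 1 := by
        have hc1 := adj_dist_cases hmed hp₂t a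
        have hc2 := adj_dist_cases hmed hqt a
        have c1 := dc G a t
        have c2 := dc G a p₂
        have c3 := dc G a q
        omega
      have hstep : Relation.ReflTransGen (Theta0 G) (s(a,b)) (s(p₂,t)) := by
        refine ih n (by omega) p₂ t hp₂a hp₂t (by omega) (by omega)
      refine hstep.tail ⟨p₂, t, p, q, ⟨hp₂t, hpq, hpp₂.symm, hqt.symm, ?_, ?_⟩, rfl, rfl⟩
      · intro h; rw [h] at hp₂a; omega
      · intro h; rw [h] at hbt'; omega


end Median

section Sep
variable {G : SimpleGraph V} (hmed : MedianGraph G)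
include hmed

/-- A vertex on the `a`-side reaches `a` avoiding the class of `ab`. -/
lemma reach_of_side {a b : V} (hab : G.Adj a b) {u : V} (hu : G.dist u a < G.dist u b) :
    (G.deleteEdges {f | Theta G (s(a,b)) f}).Reachable u a := by
  classical
  obtain ⟨w, hw⟩ := hmed.1.exists_walk_length_eq_dist u a
  have hsupp : ∀ x ∈ w.support, G.dist u x + G.dist x a = G.dist u a := by
    intro x hx
    have h1 : G.dist u x ≤ (w.takeUntil x hx).length := SimpleGraph.dist_le _
    have h2 : G.dist x a ≤ (w.dropUntil x hx).length := SimpleGraph.dist_le _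
    have h3 : (w.takeUntil x hx).length + (w.dropUntil x hx).length = w.length := by
      have := congrArg SimpleGraph.Walk.length (w.take_spec hx)
      rwa [SimpleGraph.Walk.length_append] at this
    have h4 : G.dist u a ≤ G.dist u x + G.dist x a := hmed.1.dist_triangle
    omega
  have hside : ∀ x ∈ w.support, G.dist x a < G.dist x b := by
    intro x hx
    have h1 := hsupp x hx
    have h2 : G.dist u b ≤ G.dist u x + G.dist x b := hmed.1.dist_triangle
    omega
  have hedges : ∀ e ∈ w.edges, e ∉ {f | Theta G (s(a,b)) f} := by
    intro e he
    induction e using Sym2.ind with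
    | _ x y =>
      intro hC
      obtain ⟨x', y', hxy, hadj, hiff⟩ := side_chain hmed hab hC.2.2
      have hx' : G.dist x' a < G.dist x' b := by
        have := (hiff x').2
        have e1 : G.dist x' y' = 1 := da hadj
        have e2 : G.dist x' x' = 0 := by simp
        exact this (by omega)
      have hy' : ¬ (G.dist y' a < G.dist y' b) := by
        intro h
        have := (hiff y').1 h
        have e1 : G.dist y' x' = 1 := da hadj.symm
        have e2 : G.dist y' y' = 0 := by simp
        omega
      have hxs : x ∈ w.support := w.fst_mem_support_of_mem_edges he
      have hys : y ∈ w.support := w.snd_mem_support_of_mem_edges he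
      rcases Sym2.eq_iff.1 hxy with ⟨rfl, rfl⟩ | ⟨rfl, rfl⟩
      · exact hy' (hside _ hys)
      · exact hy' (hside _ hxs)
  exact (w.toDeleteEdges _ hedges).reachable

lemma class_swap (a b : V) :
    {f | Theta G (s(a,b)) f} = {f | Theta G (s(b,a)) f} := by
  rw [Sym2.eq_swap]

lemma reach_of_side' {a b : V} (hab : G.Adj a b) {u : V} (hu : G.dist u b < G.dist u a) :
    (G.deleteEdges {f | Theta G (s(a,b)) f}).Reachable u b := by
  rw [class_swap hmed a b]
  exact reach_of_side hmed hab.symm hu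

lemma walk_side {a b : V} (hab : G.Adj a b) {u v : V}
    (ω : (G.deleteEdges {f | Theta G (s(a,b)) f}).Walk u v) :
    G.dist u a < G.dist u b → G.dist v a < G.dist v b := by
  induction ω with
  | nil => exact id
  | @cons x y z h ω ih =>
    intro hu
    apply ih
    obtain ⟨hadj, hnC⟩ := SimpleGraph.deleteEdges_adj.1 h
    by_contra hy
    have hy' : G.dist y b < G.dist y a := by
      have := dist_ne_of_adj hmed hab y
      omega
    exact hnC ⟨hab, hadj, cross hmed hab (G.dist x a) x y rfl hadj hu hy'⟩

/-- Separation by the Θ-class of an edge is exactly distance-side difference. -/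
lemma sep_iff {a b : V} (hab : G.Adj a b) (u v : V) :
    Separates G {f | Theta G (s(a,b)) f} u v ↔
      ¬ (G.dist u a < G.dist u b ↔ G.dist v a < G.dist v b) := by
  constructor
  · intro hsep
    by_contra hiff
    rcases Classical.em (G.dist u a < G.dist u b) with hu | hu
    · exact hsep (((reach_of_side hmed hab hu).trans
        (reach_of_side hmed hab (hiff.1 hu)).symm))
    · have hu' : G.dist u b < G.dist u a := by
        have := dist_ne_of_adj hmed hab u
        have c1 := dc G u a
        have c2 := dc G u b
        omega
      have hv' : G.dist v b < G.dist v a := by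
        have := dist_ne_of_adj hmed hab v
        have hv := fun h => hu (hiff.2 h)
        omega
      exact hsep (((reach_of_side' hmed hab hu').trans
        (reach_of_side' hmed hab hv').symm))
  · intro hdiff hreach
    rcases Classical.em (G.dist u a < G.dist u b) with hu | hu
    · obtain ⟨ω⟩ := hreach
      exact hdiff ⟨fun _ => walk_side hmed hab ω hu, fun _ => hu⟩
    · obtain ⟨ω⟩ := hreach.symm
      have hv : ¬ G.dist v a < G.dist v b := fun hv => hu (walk_side hmed hab ω hv)
      exact hdiff ⟨fun h => absurd h hu, fun h => absurd h hv⟩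

end Sep

section Sig
variable {G : SimpleGraph V} (hmed : MedianGraph G)

lemma sep_comm {C : Set (Sym2 V)} {u v : V} (h : Separates G C u v) : Separates G C v u :=
  fun hr => h hr.symm

lemma sig_comm (u v : V) : signature G u v = signature G v u := by
  ext C
  exact ⟨fun h => ⟨h.1, sep_comm h.2⟩, fun h => ⟨h.1, sep_comm h.2⟩⟩

lemma thetaClass_rep {C : Set (Sym2 V)} (hC : ThetaClass G C) :
    ∃ a b : V, G.Adj a b ∧ C = {f | Theta G (s(a,b)) f} := by
  obtain ⟨e, he, rfl⟩ := hC
  induction e using Sym2.ind with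
  | _ a b => exact ⟨a, b, he, rfl⟩

include hmed

lemma mem_class_of_cross {a b u w : V} (hab : G.Adj a b) (huw : G.Adj u w)
    (h : ¬ (G.dist u a < G.dist u b ↔ G.dist w a < G.dist w b)) :
    s(u,w) ∈ {f | Theta G (s(a,b)) f} := by
  rcases Classical.em (G.dist u a < G.dist u b) with hu | hu
  · have hw : ¬ (G.dist w a < G.dist w b) := fun h' => h ⟨fun _ => h', fun _ => hu⟩
    have hw' : G.dist w b < G.dist w a := by
      have := dist_ne_of_adj hmed hab w
      omega
    exact ⟨hab, huw, cross hmed hab (G.dist u a) u w rfl huw hu hw'⟩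
  · have hw : G.dist w a < G.dist w b := by
      rcases Classical.em (G.dist w a < G.dist w b) with h' | h'
      · exact h'
      · exact absurd ⟨fun h'' => absurd h'' hu, fun h'' => absurd h'' h'⟩ h
    have hu' : G.dist u b < G.dist u a := by
      have := dist_ne_of_adj hmed hab u
      omega
    have : Theta G (s(a,b)) (s(w,u)) :=
      ⟨hab, huw.symm, cross hmed hab (G.dist w a) w u rfl huw.symm hw hu'⟩
    have hswap : (s(u,w) : Sym2 V) = s(w,u) := Sym2.eq_swap
    rw [Set.mem_setOf_eq, hswap]
    exact this

/-- The signature of an edge is the singleton of its Θ-class. -/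
lemma edge_sig {u w : V} (huw : G.Adj u w) :
    signature G u w = {{f | Theta G (s(u,w)) f}} := by
  have hsu : G.dist u u < G.dist u w := by
    have := da huw
    simp [SimpleGraph.dist_self, this]
  ext C
  constructor
  · rintro ⟨hC, hsep⟩
    obtain ⟨a, b, hab, rfl⟩ := thetaClass_rep hC
    have hdiff := (sep_iff hmed hab u w).1 hsep
    have hmem := mem_class_of_cross hmed hab huw hdiff
    have := class_eq (thetaClass_of_adj hab) hmem
    simp only [Set.mem_singleton_iff]
    exact this
  · rintro rfl
    refine ⟨thetaClass_of_adj huw, (sep_iff hmed huw u w).2 ?_⟩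
    intro hiff
    have h1 : G.dist u u = 0 := SimpleGraph.dist_self
    have h2 : G.dist u w = 1 := da huw
    have h3 : G.dist w u = 1 := da huw.symm
    have h4 : G.dist w w = 0 := SimpleGraph.dist_self
    have := hiff.1 (by omega)
    omega

variable [hfin : Finite V]

lemma sig_finite (u v : V) : (signature G u v).Finite := Set.toFinite _

omit hmed in
lemma symmdiff_ncard {α : Type*} [Finite α] (A B : Set α) :
    (symmDiff A B).ncard + 2 * (A ∩ B).ncard = A.ncard + B.ncard := by
  have h1 : symmDiff A B = (A ∪ B) \ (A ∩ B) := by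
    rw [symmDiff_eq_sup_sdiff_inf]; rfl
  have h2 : (A ∪ B).ncard + (A ∩ B).ncard = A.ncard + B.ncard :=
    Set.ncard_union_add_ncard_inter A B (Set.toFinite _) (Set.toFinite _)
  have h3 : (A ∩ B) ⊆ (A ∪ B) := (Set.inter_subset_left).trans Set.subset_union_left
  have h4 : ((A ∪ B) \ (A ∩ B)).ncard = (A ∪ B).ncard - (A ∩ B).ncard :=
    Set.ncard_diff h3 (Set.toFinite _)
  have h5 : (A ∩ B).ncard ≤ (A ∪ B).ncard := Set.ncard_le_ncard h3 (Set.toFinite _)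
  rw [h1, h4]
  omega

omit hfin in
/-- Signatures compose like symmetric differences. -/
lemma sig_symmdiff (u m v : V) :
    signature G u v = symmDiff (signature G u m) (signature G m v) := by
  ext C
  by_cases hC : ThetaClass G C
  · obtain ⟨a, b, hab, rfl⟩ := thetaClass_rep hC
    simp only [Set.mem_symmDiff, signature, Set.mem_setOf_eq]
    rw [sep_iff hmed hab u v, sep_iff hmed hab u m, sep_iff hmed hab m v]
    have := thetaClass_of_adj hab
    tauto
  · simp only [Set.mem_symmDiff, signature, Set.mem_setOf_eq]
    tauto

/-- Djoković's theorem: distance equals the number of separating Θ-classes. -/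
lemma dist_eq_ncard (u v : V) : G.dist u v = (signature G u v).ncard := by
  generalize hn : G.dist u v = n
  induction n generalizing u with
  | zero =>
    have : u = v := (dist_zero_iff hmed).1 hn
    subst this
    have : signature G u u = ∅ := by
      ext C
      simp only [signature, Set.mem_setOf_eq, Set.mem_empty_iff_false, iff_false]
      rintro ⟨-, hsep⟩
      exact hsep (SimpleGraph.Reachable.refl u)
    rw [this, Set.ncard_empty]
  | succ n ih =>
    obtain ⟨w, huw, hwv⟩ := exists_adj_dist hmed.1 hn
    set C₀ : Set (Sym2 V) := {f | Theta G (s(u,w)) f} with hC₀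
    have hsu : G.dist u u < G.dist u w := by
      have := da huw
      simp [SimpleGraph.dist_self, this]
    have hvside : ¬ (G.dist v u < G.dist v w) := by
      have c1 := dc G v u
      have c2 := dc G v w
      omega
    have hsepuv : Separates G C₀ u v := by
      refine (sep_iff hmed huw u v).2 ?_
      intro hiff
      have h1 : G.dist u u = 0 := SimpleGraph.dist_self
      have h2 : G.dist u w = 1 := da huw
      exact hvside (hiff.1 (by omega))
    have hnotwv : ¬ Separates G C₀ w v := by
      intro hsep
      have := (sep_iff hmed huw w v).1 hsep
      have h3 : G.dist w u = 1 := da huw.symm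
      have h4 : G.dist w w = 0 := SimpleGraph.dist_self
      exact this ⟨fun h => absurd h (by omega), fun h => absurd h hvside⟩
    have hins : signature G u v = insert C₀ (signature G w v) := by
      ext C
      constructor
      · rintro ⟨hC, hsep⟩
        obtain ⟨a, b, hab, rfl⟩ := thetaClass_rep hC
        rcases Classical.em ((G.dist u a < G.dist u b) ↔ (G.dist w a < G.dist w b)) with
          hiff | hdiff
        · right
          refine ⟨thetaClass_of_adj hab, (sep_iff hmed hab w v).2 ?_⟩
          intro hiff2
          exact ((sep_iff hmed hab u v).1 hsep) (hiff.trans hiff2)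
        · left
          have hmem := mem_class_of_cross hmed hab huw hdiff
          exact class_eq (thetaClass_of_adj hab) hmem
      · rintro (rfl | ⟨hC, hsep⟩)
        · exact ⟨thetaClass_of_adj huw, hsepuv⟩
        · obtain ⟨a, b, hab, rfl⟩ := thetaClass_rep hC
          refine ⟨thetaClass_of_adj hab, (sep_iff hmed hab u v).2 ?_⟩
          intro hiff
          rcases Classical.em ((G.dist u a < G.dist u b) ↔ (G.dist w a < G.dist w b)) with
            hiff2 | hdiff
          · exact ((sep_iff hmed hab w v).1 hsep) ((hiff2.symm.trans hiff))
          · have hmem := mem_class_of_cross hmed hab huw hdiff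
            have hceq := class_eq (thetaClass_of_adj hab) hmem
            rw [hceq] at hsep
            exact hnotwv hsep
    have hC₀notin : C₀ ∉ signature G w v := fun h => hnotwv h.2
    rw [hins, Set.ncard_insert_of_notMem hC₀notin (Set.toFinite _)]
    have := ih w hwv
    omega

/-- Betweenness is equivalent to disjointness of the two signatures. -/
lemma between_iff_disjoint (u m v : V) :
    G.dist u m + G.dist m v = G.dist u v ↔ signature G u m ∩ signature G m v = ∅ := by
  have hsd := sig_symmdiff hmed u m v
  have hcard := symmdiff_ncard (signature G u m) (signature G m v)
  rw [← hsd] at hcard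
  rw [dist_eq_ncard hmed u v, dist_eq_ncard hmed u m, dist_eq_ncard hmed m v]
  constructor
  · intro h
    have : (signature G u m ∩ signature G m v).ncard = 0 := by omega
    exact (Set.ncard_eq_zero (Set.toFinite _)).1 this
  · intro h
    rw [h, Set.ncard_empty] at hcard
    omega

end Sig

section Ladder
variable {G : SimpleGraph V} (hmed : MedianGraph G) [hfin : Finite V]

omit hfin in
lemma mem_interval_iff {G : SimpleGraph V} {a m b : V} :
    m ∈ interval G a b ↔ G.dist a m + G.dist m b = G.dist a b := Iff.rfl

include hmed

lemma sig_subset_of_between {u m v : V} (h : G.dist u m + G.dist m v = G.dist u v) :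
    signature G u m ⊆ signature G u v := by
  intro C hC
  have hdisj := (between_iff_disjoint hmed u m v).1 h
  have hsd := sig_symmdiff hmed u m v
  rw [hsd, Set.mem_symmDiff]
  left
  exact ⟨hC, fun h' => Set.eq_empty_iff_forall_notMem.1 hdisj C ⟨hC, h'⟩⟩

omit hfin in
lemma first_edge_mem_sig {m w v : V} (hmw : G.Adj m w) (h : G.dist m v = G.dist w v + 1) :
    {f | Theta G (s(m,w)) f} ∈ signature G m v := by
  refine ⟨thetaClass_of_adj hmw, (sep_iff hmed hmw m v).2 ?_⟩
  intro hiff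
  have h1 : G.dist m m = 0 := SimpleGraph.dist_self
  have h2 : G.dist m w = 1 := da hmw
  have h3 := hiff.1 (by omega)
  have c1 := dc G v m
  have c2 := dc G v w
  omega

/-- If the signatures from `m` towards `u` and `v` share a class, so do the ladders. -/
lemma ladder_inter_of_sig_inter {m u v : V}
    (h : (signature G m u ∩ signature G m v).Nonempty) :
    (ladder G m u ∩ ladder G m v).Nonempty := by
  obtain ⟨g, ⟨hg1, hg2, hg3⟩, -⟩ := hmed.2 u v m
  have hg1' : G.dist u g + G.dist g v = G.dist u v := hg1
  have hg2' : G.dist v g + G.dist g m = G.dist v m := hg2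
  have hg3' : G.dist m g + G.dist g u = G.dist m u := hg3
  have hgm : g ≠ m := by
    rintro rfl
    have hbet : G.dist u g + G.dist g v = G.dist u v := hg1'
    have hdisj := (between_iff_disjoint hmed u g v).1 hbet
    obtain ⟨C, hC1, hC2⟩ := h
    rw [sig_comm] at hC1
    exact Set.eq_empty_iff_forall_notMem.1 hdisj C ⟨hC1, hC2⟩
  have hpos : G.dist m g ≠ 0 := fun h0 => hgm ((dist_zero_iff hmed).1 h0).symm
  obtain ⟨n, hn⟩ : ∃ n, G.dist m g = n + 1 := ⟨G.dist m g - 1, by omega⟩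
  obtain ⟨w, hmw, hwg⟩ := exists_adj_dist hmed.1 hn
  have hC' : {f | Theta G (s(m,w)) f} ∈ signature G m g :=
    first_edge_mem_sig hmed hmw (by omega)
  have hsub1 : signature G m g ⊆ signature G m u := sig_subset_of_between hmed hg3'
  have hsub2 : signature G m g ⊆ signature G m v := by
    apply sig_subset_of_between hmed
    have c1 := dc G v g
    have c2 := dc G g m
    have c3 := dc G v m
    have c4 := dc G g v
    omega
  have hself : (s(m,w) : Sym2 V) ∈ {f | Theta G (s(m,w)) f} := theta_refl hmw
  exact ⟨{f | Theta G (s(m,w)) f},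
    ⟨⟨hsub1 hC', w, hmw, hself⟩, ⟨hsub2 hC', w, hmw, hself⟩⟩⟩

lemma between_of_ladder_disjoint {m u v : V}
    (h : ladder G m u ∩ ladder G m v = ∅) :
    G.dist u m + G.dist m v = G.dist u v := by
  rw [between_iff_disjoint hmed]
  by_contra hne
  have hne' : (signature G m u ∩ signature G m v).Nonempty := by
    rw [Set.nonempty_iff_ne_empty]
    intro h0
    apply hne
    rw [sig_comm (u := u) (v := m)]
    exact h0
  obtain ⟨C, hC⟩ := ladder_inter_of_sig_inter hmed hne'
  exact Set.eq_empty_iff_forall_notMem.1 h C hC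

omit hfin in
lemma ladder_disjoint_of_between {m u v : V}
    (h : G.dist u m + G.dist m v = G.dist u v) [hfin : Finite V] :
    ladder G m u ∩ ladder G m v = ∅ := by
  have hdisj := (between_iff_disjoint hmed u m v).1 h
  rw [Set.eq_empty_iff_forall_notMem]
  rintro C ⟨⟨hC1, -⟩, ⟨hC2, -⟩⟩
  rw [sig_comm] at hC1
  exact Set.eq_empty_iff_forall_notMem.1 hdisj C ⟨hC1, hC2⟩

omit hfin in
/-- A class of the ladder towards `u` is the class of an edge `mw` with `w` closer to `u`. -/
lemma ladder_edge {m u : V} {C : Set (Sym2 V)} (hC : C ∈ ladder G m u) :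
    ∃ w, G.Adj m w ∧ C = {f | Theta G (s(m,w)) f} ∧ G.dist u w + 1 = G.dist u m := by
  obtain ⟨⟨hCt, hsep⟩, w, hmw, hmem⟩ := hC
  have hceq := class_eq hCt hmem
  refine ⟨w, hmw, hceq, ?_⟩
  rw [hceq] at hsep
  have hdiff := (sep_iff hmed hmw m u).1 hsep
  have h1 : G.dist m m = 0 := SimpleGraph.dist_self
  have h2 : G.dist m w = 1 := da hmw
  have h3 : ¬ (G.dist u m < G.dist u w) := fun hlt => hdiff ⟨fun _ => hlt, fun _ => by omega⟩
  have h4 := dist_ne_of_adj hmed hmw u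
  have h5 := adj_dist_cases hmed hmw u
  omega

/-- The ladder towards `u` is an outgoing POF when `m ∈ I(v₀,u)`. -/
lemma ladder_outgoing {v₀ m u : V} (h : m ∈ interval G v₀ u) :
    OutgoingPOF G v₀ m (ladder G m u) := by
  have hbet : G.dist v₀ m + G.dist m u = G.dist v₀ u := h
  refine ⟨⟨fun C hC => hC.1.1, ?_⟩, ?_⟩
  · -- pairwise orthogonal
    intro C hC C' hC' hne
    obtain ⟨w, hmw, hCeq, hdw⟩ := ladder_edge hmed hC
    obtain ⟨w', hmw', hCeq', hdw'⟩ := ladder_edge hmed hC'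
    have hww' : w ≠ w' := by
      rintro rfl
      exact hne (hCeq.trans hCeq'.symm)
    obtain ⟨t, hwt, hw't, hdt, htm⟩ := quad hmed (u := u) hmw hmw' hww' hdw hdw'
    refine ⟨m, w, w', t, ⟨hmw, hw't, hmw', hwt, fun h' => htm h'.symm, hww'⟩, ?_, ?_, ?_, ?_⟩
    · rw [hCeq]; exact theta_refl hmw
    · rw [hCeq]
      exact ⟨hmw, hw't, Relation.ReflTransGen.single
        ⟨m, w, w', t, ⟨hmw, hw't, hmw', hwt, fun h' => htm h'.symm, hww'⟩, rfl, rfl⟩⟩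
    · rw [hCeq']; exact theta_refl hmw'
    · rw [hCeq']
      exact ⟨hmw', hwt, Relation.ReflTransGen.single
        ⟨m, w', w, t, ⟨hmw', hwt, hmw, hw't, fun h' => htm h'.symm, hww'.symm⟩, rfl, rfl⟩⟩
  · -- outgoing
    intro C hC
    obtain ⟨w, hmw, hCeq, hdw⟩ := ladder_edge hmed hC
    refine ⟨w, hmw, ?_, by rw [hCeq]; exact theta_refl hmw⟩
    -- C ∉ signature v₀ m since signatures are disjoint
    have hdisj := (between_iff_disjoint hmed v₀ m u).1 hbet
    have hCmu : C ∈ signature G m u := hC.1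
    have hnot : C ∉ signature G v₀ m :=
      fun h' => Set.eq_empty_iff_forall_notMem.1 hdisj C ⟨h', hCmu⟩
    have hnsep : ¬ Separates G C v₀ m := fun h' => hnot ⟨hCmu.1, h'⟩
    rw [hCeq] at hnsep
    have h1 : G.dist m m = 0 := SimpleGraph.dist_self
    have h2 : G.dist m w = 1 := da hmw
    have := (sep_iff hmed hmw v₀ m)
    have h3 : G.dist v₀ m < G.dist v₀ w := by
      by_contra hge
      exact hnsep (this.2 (fun hiff => hge (hiff.2 (by omega))))
    exact h3

end Ladder

section Core
variable {G : SimpleGraph V} (hmed : MedianGraph G) [hfin : Finite V]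
  (v₀ : V) (φ : V → Set (Set (Sym2 V)) → ℕ)
include hmed

/-- Given two disjoint outgoing POFs realised by `φ`, they produce a pair of
vertices with median `m` at distance `φ m L + φ m L*`. -/
lemma core_pair
    (hφ : ∀ m L, OutgoingPOF G v₀ m L →
      IsGreatest {n | ∃ v, m ∈ interval G v₀ v ∧ ladder G m v = L ∧
        n = G.dist m v} (φ m L))
    {m : V} {L Lstar : Set (Set (Sym2 V))}
    (hL : OutgoingPOF G v₀ m L) (hL' : OutgoingPOF G v₀ m Lstar)
    (hdisj : L ∩ Lstar = ∅) :
    ∃ u v, IsMedian G u v v₀ m ∧ G.dist u v = φ m L + φ m Lstar := by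
  obtain ⟨u, hmu, hlu, hnu⟩ := (hφ m L hL).1
  obtain ⟨v, hmv, hlv, hnv⟩ := (hφ m Lstar hL').1
  have hld : ladder G m u ∩ ladder G m v = ∅ := by rw [hlu, hlv]; exact hdisj
  have hbet : G.dist u m + G.dist m v = G.dist u v := between_of_ladder_disjoint hmed hld
  have hmu' : G.dist v₀ m + G.dist m u = G.dist v₀ u := hmu
  have hmv' : G.dist v₀ m + G.dist m v = G.dist v₀ v := hmv
  refine ⟨u, v, ⟨hbet, ?_, hmu⟩, ?_⟩
  · show G.dist v m + G.dist m v₀ = G.dist v v₀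
    have c1 := dc G v m
    have c2 := dc G m v₀
    have c3 := dc G v v₀
    omega
  · have c1 := dc G u m
    omega

/-- Conversely, any pair with median `m` is dominated by a disjoint pair of
outgoing POFs. -/
lemma core_median
    (hφ : ∀ m L, OutgoingPOF G v₀ m L →
      IsGreatest {n | ∃ v, m ∈ interval G v₀ v ∧ ladder G m v = L ∧
        n = G.dist m v} (φ m L))
    {u v m : V} (hm : IsMedian G u v v₀ m) :
    ∃ L Lstar, OutgoingPOF G v₀ m L ∧ OutgoingPOF G v₀ m Lstar ∧
      L ∩ Lstar = ∅ ∧ G.dist u v ≤ φ m L + φ m Lstar := by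
  obtain ⟨hm1, hm2, hm3⟩ := hm
  have hm1' : G.dist u m + G.dist m v = G.dist u v := hm1
  have hm2' : G.dist v m + G.dist m v₀ = G.dist v v₀ := hm2
  have hm2'' : m ∈ interval G v₀ v := by
    show G.dist v₀ m + G.dist m v = G.dist v₀ v
    have c1 := dc G v m
    have c2 := dc G m v₀
    have c3 := dc G v v₀
    omega
  refine ⟨ladder G m u, ladder G m v, ladder_outgoing hmed hm3, ladder_outgoing hmed hm2'',
    ladder_disjoint_of_between hmed hm1', ?_⟩
  have h1 : G.dist m u ≤ φ m (ladder G m u) :=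
    (hφ m (ladder G m u) (ladder_outgoing hmed hm3)).2 ⟨u, hm3, rfl, rfl⟩
  have h2 : G.dist m v ≤ φ m (ladder G m v) :=
    (hφ m (ladder G m v) (ladder_outgoing hmed hm2'')).2 ⟨v, hm2'', rfl, rfl⟩
  have c1 := dc G u m
  omega

end Core

/-- In a median graph with basepoint `v₀`, for every vertex `m`,
`Υ(m) = max{d(u,v) : m = m(u,v,v₀)}` equals the maximum of
`φ(m,L) + φ(m,L*)` over disjoint POFs `L, L*` outgoing from `m`; consequently
the diameter is the maximum of these quantities over all `m`. -/
theorem diameter_via_disjoint_pofs {V : Type*} [Fintype V] (G : SimpleGraph V)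
    (hmed : MedianGraph G) (v₀ : V)
    (φ : V → Set (Set (Sym2 V)) → ℕ)
    (hφ : ∀ m L, OutgoingPOF G v₀ m L →
      IsGreatest {n | ∃ v, m ∈ interval G v₀ v ∧ ladder G m v = L ∧
        n = G.dist m v} (φ m L)) :
    (∀ m Υ, IsGreatest {n | ∃ u v, IsMedian G u v v₀ m ∧ n = G.dist u v} Υ →
      IsGreatest {n | ∃ L Lstar, OutgoingPOF G v₀ m L ∧ OutgoingPOF G v₀ m Lstar ∧
        L ∩ Lstar = ∅ ∧ n = φ m L + φ m Lstar} Υ) ∧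
    (∀ D, IsGreatest {n | ∃ u v : V, n = G.dist u v} D →
      IsGreatest {n | ∃ m L Lstar, OutgoingPOF G v₀ m L ∧ OutgoingPOF G v₀ m Lstar ∧
        L ∩ Lstar = ∅ ∧ n = φ m L + φ m Lstar} D)
    := by
  constructor
  · intro m Υ hgr
    have hub : ∀ n ∈ {n | ∃ L Lstar, OutgoingPOF G v₀ m L ∧ OutgoingPOF G v₀ m Lstar ∧
        L ∩ Lstar = ∅ ∧ n = φ m L + φ m Lstar}, n ≤ Υ := by
      rintro n ⟨L, Lstar, h1, h2, h3, rfl⟩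
      obtain ⟨u', v', hm', hd'⟩ := core_pair hmed v₀ φ hφ h1 h2 h3
      exact hgr.2 ⟨u', v', hm', hd'.symm⟩
    constructor
    · obtain ⟨u, v, hmuv, hdist⟩ := hgr.1
      obtain ⟨L, Lstar, h1, h2, h3, h4⟩ := core_median hmed v₀ φ hφ hmuv
      have hle : φ m L + φ m Lstar ≤ Υ := hub _ ⟨L, Lstar, h1, h2, h3, rfl⟩
      exact ⟨L, Lstar, h1, h2, h3, by omega⟩
    · exact fun n hn => hub n hn
  · intro D hgr
    have hub : ∀ n ∈ {n | ∃ m L Lstar, OutgoingPOF G v₀ m L ∧ OutgoingPOF G v₀ m Lstar ∧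
        L ∩ Lstar = ∅ ∧ n = φ m L + φ m Lstar}, n ≤ D := by
      rintro n ⟨m, L, Lstar, h1, h2, h3, rfl⟩
      obtain ⟨u', v', hm', hd'⟩ := core_pair hmed v₀ φ hφ h1 h2 h3
      exact hgr.2 ⟨u', v', hd'.symm⟩
    constructor
    · obtain ⟨u, v, hD⟩ := hgr.1
      obtain ⟨m, hm, -⟩ := hmed.2 u v v₀
      obtain ⟨L, Lstar, h1, h2, h3, h4⟩ := core_median hmed v₀ φ hφ hm
      have hle : φ m L + φ m Lstar ≤ D := hub _ ⟨m, L, Lstar, h1, h2, h3, rfl⟩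
      exact ⟨m, L, Lstar, h1, h2, h3, by omega⟩
    · exact fun n hn => hub n hn


end MedianPaper
end

section
/- There exists a median graph G of dimension 2 together with vertices r₁, a₁, b₁ such that d(r₁,a₁) = ecc(r₁), d(a₁,b₁) = ecc(a₁), and yet d(a₁,b₁) < diam(G); in other words, the 2-sweep heuristic (a BFS from an arbitrary vertex r₁ to a farthest vertex a₁, followed by a BFS from a₁ to a farthest vertex b₁) can fail to return the diameter on median graphs. A witness is the 5-vertex graph obtained from a 4-cycle by attaching a pendant vertex. -/
namespace MedianPaper

variable {V : Type*}

/-- The 5-vertex graph obtained from a 4-cycle `0-1-3-2-0` by attaching the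
pendant vertex `4` to vertex `3`. -/
def pendantSquare : SimpleGraph (Fin 5) :=
  SimpleGraph.fromRel (fun a b =>
    (a = 0 ∧ b = 1) ∨ (a = 0 ∧ b = 2) ∨ (a = 1 ∧ b = 3) ∨
    (a = 2 ∧ b = 3) ∨ (a = 3 ∧ b = 4))

instance : DecidableRel pendantSquare.Adj := fun a b =>
  inferInstanceAs (Decidable (a ≠ b ∧
    (((a = 0 ∧ b = 1) ∨ (a = 0 ∧ b = 2) ∨ (a = 1 ∧ b = 3) ∨
      (a = 2 ∧ b = 3) ∨ (a = 3 ∧ b = 4)) ∨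
     ((b = 0 ∧ a = 1) ∨ (b = 0 ∧ a = 2) ∨ (b = 1 ∧ a = 3) ∨
      (b = 2 ∧ a = 3) ∨ (b = 3 ∧ a = 4)))))

lemma adj01 : pendantSquare.Adj 0 1 := by decide
lemma adj02 : pendantSquare.Adj 0 2 := by decide
lemma adj13 : pendantSquare.Adj 1 3 := by decide
lemma adj23 : pendantSquare.Adj 2 3 := by decide
lemma adj34 : pendantSquare.Adj 3 4 := by decide

lemma reach3 : ∀ u : Fin 5, pendantSquare.Reachable u 3 := by
  intro u
  fin_cases u
  · exact ⟨.cons adj01 (.cons adj13 .nil)⟩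
  · exact ⟨.cons adj13 .nil⟩
  · exact ⟨.cons adj23 .nil⟩
  · exact ⟨.nil⟩
  · exact ⟨.cons adj34.symm .nil⟩

lemma pendantConnected : pendantSquare.Connected := by
  constructor
  exact fun u v => (reach3 u).trans (reach3 v).symm

def D : Fin 5 → Fin 5 → ℕ :=
  ![![0,1,1,2,3],![1,0,2,1,2],![1,2,0,1,2],![2,1,1,0,1],![3,2,2,1,0]]

lemma Dlip : ∀ (u a b : Fin 5), pendantSquare.Adj a b → D u b ≤ D u a + 1 := by decide

lemma Dself : ∀ u : Fin 5, D u u = 0 := by decide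

lemma lip (f : Fin 5 → ℕ) (hf : ∀ a b, pendantSquare.Adj a b → f b ≤ f a + 1) :
    ∀ {u v : Fin 5} (w : pendantSquare.Walk u v), f v ≤ f u + w.length := by
  intro u v w
  induction w with
  | nil => simp
  | @cons a b c h p ih =>
    have h1 := hf a b h
    simp only [SimpleGraph.Walk.length_cons]
    omega

lemma dist_ge (u v : Fin 5) : D u v ≤ pendantSquare.dist u v := by
  obtain ⟨w, hw⟩ := (pendantConnected u v).exists_walk_length_eq_dist
  have := lip (D u) (Dlip u) w
  have h0 := Dself u
  omega

lemma dle {u v : Fin 5} (w : pendantSquare.Walk u v) {n : ℕ} (h : w.length ≤ n) :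
    pendantSquare.dist u v ≤ n := (SimpleGraph.dist_le w).trans h


lemma dist_ub (u v : Fin 5) : pendantSquare.dist u v ≤ D u v := by
  fin_cases u
  · fin_cases v
    · simp [SimpleGraph.dist_self, D]
    · exact dle (.cons adj01 .nil) (by simp [D])
    · exact dle (.cons adj02 .nil) (by simp [D])
    · exact dle (.cons adj01 (.cons adj13 .nil)) (by simp [D])
    · exact dle (.cons adj01 (.cons adj13 (.cons adj34 .nil))) (by simp [D])
  · fin_cases v
    · exact dle (.cons adj01.symm .nil) (by simp [D])
    · simp [SimpleGraph.dist_self, D]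
    · exact dle (.cons adj13 (.cons adj23.symm .nil)) (by simp [D])
    · exact dle (.cons adj13 .nil) (by simp [D])
    · exact dle (.cons adj13 (.cons adj34 .nil)) (by simp [D])
  · fin_cases v
    · exact dle (.cons adj02.symm .nil) (by simp [D])
    · exact dle (.cons adj23 (.cons adj13.symm .nil)) (by simp [D])
    · simp [SimpleGraph.dist_self, D]
    · exact dle (.cons adj23 .nil) (by simp [D])
    · exact dle (.cons adj23 (.cons adj34 .nil)) (by simp [D])
  · fin_cases v
    · exact dle (.cons adj13.symm (.cons adj01.symm .nil)) (by simp [D])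
    · exact dle (.cons adj13.symm .nil) (by simp [D])
    · exact dle (.cons adj23.symm .nil) (by simp [D])
    · simp [SimpleGraph.dist_self, D]
    · exact dle (.cons adj34 .nil) (by simp [D])
  · fin_cases v
    · exact dle (.cons adj34.symm (.cons adj13.symm (.cons adj01.symm .nil))) (by simp [D])
    · exact dle (.cons adj34.symm (.cons adj13.symm .nil)) (by simp [D])
    · exact dle (.cons adj34.symm (.cons adj23.symm .nil)) (by simp [D])
    · exact dle (.cons adj34.symm .nil) (by simp [D])
    · simp [SimpleGraph.dist_self, D]

lemma dist_eq (u v : Fin 5) : pendantSquare.dist u v = D u v :=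
  le_antisymm (dist_ub u v) (dist_ge u v)

lemma median_all : ∀ x y z : Fin 5, ∃! m : Fin 5,
    m ∈ interval pendantSquare x y ∧ m ∈ interval pendantSquare y z ∧
    m ∈ interval pendantSquare z x := by
  simp only [interval, Set.mem_setOf_eq, dist_eq, ExistsUnique]
  decide

def S : Set (Fin 5) := {x | x ≠ 4}
instance : DecidablePred (· ∈ S) := fun x => inferInstanceAs (Decidable (x ≠ 4))

def toCube : Fin 5 → Finset (Fin 2) := ![∅, {0}, {1}, {0,1}, ∅]
def fromCube : Finset (Fin 2) → Fin 5 := fun A =>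
  if (0:Fin 2) ∈ A then (if (1:Fin 2) ∈ A then 3 else 1)
  else (if (1:Fin 2) ∈ A then 2 else 0)

lemma fromCube_mem : ∀ A, fromCube A ∈ S := by decide

instance : DecidableRel (cubeGraph 2).Adj := fun A B =>
  inferInstanceAs (Decidable ((symmDiff A B).card = 1))
instance : DecidableRel (pendantSquare.induce S).Adj := fun a b =>
  inferInstanceAs (Decidable (pendantSquare.Adj a.1 b.1))

lemma iso_adj : ∀ a b : S, (cubeGraph 2).Adj (toCube a.1) (toCube b.1) ↔
    (pendantSquare.induce S).Adj a b := by decide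

def myIso : (pendantSquare.induce S) ≃g cubeGraph 2 where
  toFun := fun x => toCube x.1
  invFun := fun A => ⟨fromCube A, fromCube_mem A⟩
  left_inv := by decide
  right_inv := by decide
  map_rel_iff' := @fun a b => iso_adj a b

lemma dim_le {T : Set (Fin 5)} {k : ℕ} (e : (pendantSquare.induce T) ≃g cubeGraph k) :
    k ≤ 2 := by
  have inj : Function.Injective (fun A : Finset (Fin k) => ((e.symm A : T) : Fin 5)) :=
    fun A B hAB => e.symm.injective (Subtype.ext hAB)
  have hc := Fintype.card_le_of_injective _ inj
  rw [Fintype.card_finset, Fintype.card_fin, Fintype.card_fin] at hc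
  by_contra hk
  have : 2 ^ 3 ≤ 2 ^ k := Nat.pow_le_pow_right (by norm_num) (by omega)
  omega

/-- There is a median graph of dimension 2 (a 4-cycle with a
pendant vertex) and vertices `r₁, a₁, b₁` with `d(r₁,a₁) = ecc(r₁)` and
`d(a₁,b₁) = ecc(a₁)`, yet `d(a₁,b₁) < diam(G)`: the 2-sweep heuristic fails. -/
theorem two_sweep_fails_on_median_graphs :
    MedianGraph pendantSquare ∧ GraphDim pendantSquare 2 ∧
    ∃ r₁ a₁ b₁ : Fin 5,
      (∀ x, pendantSquare.dist r₁ x ≤ pendantSquare.dist r₁ a₁) ∧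
      (∀ x, pendantSquare.dist a₁ x ≤ pendantSquare.dist a₁ b₁) ∧
      (∃ x y : Fin 5, pendantSquare.dist a₁ b₁ < pendantSquare.dist x y) := by
  refine ⟨⟨pendantConnected, median_all⟩, ⟨⟨S, ⟨myIso⟩⟩, ?_⟩, 1, 2, 4, ?_, ?_, 0, 4, ?_⟩
  · intro T k h
    obtain ⟨e⟩ := h
    exact dim_le e
  · intro x
    simp only [dist_eq]
    revert x
    decide
  · intro x
    simp only [dist_eq]
    revert x
    decide
  · simp only [dist_eq]
    decide

end MedianPaper
end

section
/- In a median graph, every convex set of vertices is gated. -/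
namespace MedianPaper

variable {V : Type*}

/-- In a median graph, every (nonempty) convex set of vertices is
gated. -/
theorem convex_implies_gated {V : Type*} [Fintype V] (G : SimpleGraph V)
    (hmed : MedianGraph G) (H : Set V) (hne : H.Nonempty)
    (hconv : ConvexSet G H) : GatedSet G H := by
  classical
  obtain ⟨hconn, hmeds⟩ := hmed
  intro x
  have hne' : H.toFinset.Nonempty := by rwa [Set.toFinset_nonempty]
  obtain ⟨g, hgF, hgmin⟩ := H.toFinset.exists_min_image (fun h => G.dist x h) hne'
  rw [Set.mem_toFinset] at hgF
  refine ⟨g, hgF, fun h hh => ?_⟩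
  obtain ⟨m, ⟨hm1, hm2, hm3⟩, _⟩ := hmeds x g h
  have hmH : m ∈ H := hconv g hgF h hh hm2
  have hle : G.dist x g ≤ G.dist x m := hgmin m (Set.mem_toFinset.mpr hmH)
  have h1 : G.dist x m + G.dist m g = G.dist x g := hm1
  have h0 : G.dist m g = 0 := by omega
  have hmg : m = g := (hconn.dist_eq_zero_iff).mp h0
  have h3 : G.dist h m + G.dist m x = G.dist h x := hm3
  show G.dist x g + G.dist g h = G.dist x h
  subst hmg
  have c1 : G.dist x m = G.dist m x := SimpleGraph.dist_comm ..
  have c2 : G.dist m h = G.dist h m := SimpleGraph.dist_comm ..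
  have c3 : G.dist x h = G.dist h x := SimpleGraph.dist_comm ..
  omega

end MedianPaper
end
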